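/- Let Γ be a countably infinite group with a proper right-invariant metric d. Every local Γ-ideal has the join property. -/

import Mathlib

open Set Function Topology

namespace DescColor

/-- A set is *Baire measurable* if it differs from an open set by a meager set. -/
def BaireMSet {X : Type*} [TopologicalSpace X] (S : Set X) : Prop :=
  ∃ U : Set X, IsOpen U ∧ IsMeagre (symmDiff S U)

/-- A function is *Baire measurable* if preimages of measurable (Borel) sets are
Baire measurable. -/
def BaireMFun {X Y : Type*} [TopologicalSpace X] [MeasurableSpace Y] (f : X → Y) : Prop :=
  ∀ B : Set Y, MeasurableSet B → BaireMSet (f ⁻¹' B)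

variable {Γ : Type*}

/-- The shift action of `Γ` on colorings `Γ → ℕ`: `(γ · ω)(δ) = ω (δ γ)`. -/
def shift [Group Γ] (γ : Γ) (ω : Γ → ℕ) : Γ → ℕ := fun δ => ω (δ * γ)

/-- A subshift: a closed shift-invariant set of colorings. -/
def IsSubshift [Group Γ] (Ω : Set (Γ → ℕ)) : Prop :=
  IsClosed Ω ∧ ∀ (γ : Γ), ∀ ω ∈ Ω, shift γ ω ∈ Ω

/-- The coding map `π_f(x)(γ) = f (γ • x)`. -/
def codingMap [Group Γ] {X : Type*} [MulAction Γ X] (f : X → ℕ) (x : X) : Γ → ℕ :=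
  fun γ => f (γ • x)

/-- The action of `Γ` on `X` admits a Baire measurable `Ω`-coloring. -/
def HasBMColoring [Group Γ] (X : Type*) [TopologicalSpace X] [MulAction Γ X]
    (Ω : Set (Γ → ℕ)) : Prop :=
  ∃ f : X → ℕ, BaireMFun f ∧ {x : X | codingMap f x ∈ Ω} ∈ residual X

/-- The action of `Γ` on `X` is generically smooth. -/
def GenSmooth (Γ : Type*) [Group Γ] (X : Type*) [TopologicalSpace X] [MulAction Γ X] : Prop :=
  ∃ f : X → ℝ, BaireMFun f ∧ ∀ x y : X, f x = f y ↔ ∃ γ : Γ, γ • x = y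

/-- The shift action of `Γ` on `ℕ^Γ` admits a Baire measurable `Ω`-coloring. -/
def ShiftHasBMColoring (Γ : Type*) [Group Γ] (Ω : Set (Γ → ℕ)) : Prop :=
  ∃ f : (Γ → ℕ) → ℕ, BaireMFun f ∧
    {ω : Γ → ℕ | (fun γ : Γ => f (shift γ ω)) ∈ Ω} ∈ residual (Γ → ℕ)

/-- A free continuous action of `Γ` on a Polish space. -/
structure FreePolishAction (Γ : Type*) [Group Γ] where
  X : Type
  ts : TopologicalSpace X
  polish : @PolishSpace X ts
  smul : Γ → X → X
  one_smul' : ∀ x, smul 1 x = x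
  mul_smul' : ∀ γ δ x, smul (γ * δ) x = smul γ (smul δ x)
  cont : ∀ γ : Γ, @Continuous X X ts ts (smul γ)
  free : ∀ (γ : Γ) (x : X), smul γ x = x → γ = 1

/-- A free continuous action on a Polish space admits a Baire measurable `Ω`-coloring. -/
def FreePolishAction.HasBMCol [Group Γ] (α : FreePolishAction Γ) (Ω : Set (Γ → ℕ)) : Prop :=
  letI := α.ts
  ∃ f : α.X → ℕ, BaireMFun f ∧ {x : α.X | (fun γ : Γ => f (α.smul γ x)) ∈ Ω} ∈ residual α.X

/-- A free continuous action on a Polish space is generically smooth. -/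
def FreePolishAction.IsGenSmooth [Group Γ] (α : FreePolishAction Γ) : Prop :=
  letI := α.ts
  ∃ f : α.X → ℝ, BaireMFun f ∧ ∀ x y : α.X, f x = f y ↔ ∃ γ : Γ, α.smul γ x = y

/-- A subshift is *hard* if every free continuous action of `Γ` on a Polish space that
admits a Baire measurable `Ω`-coloring is generically smooth. -/
def Hard (Γ : Type*) [Group Γ] (Ω : Set (Γ → ℕ)) : Prop :=
  ∀ α : FreePolishAction Γ, α.HasBMCol Ω → α.IsGenSmooth

/-- A subshift is *easy* if every free continuous action of `Γ` on a Polish space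
admits a Baire measurable `Ω`-coloring. -/
def Easy (Γ : Type*) [Group Γ] (Ω : Set (Γ → ℕ)) : Prop :=
  ∀ α : FreePolishAction Γ, α.HasBMCol Ω

/-- Finite partial colorings of `Γ`: partial maps `Γ ⇀ ℕ` with finite domain. -/
abbrev FPC (Γ : Type*) : Type _ := {φ : Γ → Option ℕ // {γ : Γ | φ γ ≠ none}.Finite}

/-- The domain of a finite partial coloring. -/
def domP (φ : FPC Γ) : Set Γ := {γ : Γ | φ.1 γ ≠ none}

/-- `Fin(Ω)`: the set of finite partial colorings extending to an element of `Ω`. -/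
def FinOf (Ω : Set (Γ → ℕ)) : Set (FPC Γ) :=
  {φ | ∃ ω ∈ Ω, ∀ (γ : Γ) (c : ℕ), φ.1 γ = some c → ω γ = c}

/-- `g : FPC Γ → Bool` codes (the set `Fin(Ω)` of) the subshift `Ω`. -/
def CodesSubshift [Group Γ] (g : FPC Γ → Bool) (Ω : Set (Γ → ℕ)) : Prop :=
  IsSubshift Ω ∧ ∀ φ : FPC Γ, g φ = true ↔ φ ∈ FinOf Ω

/-- The shift action of `Γ` on finite partial colorings: `(γ · φ)(δ) = φ(δγ)`. -/
def shiftP [Group Γ] (γ : Γ) (φ : FPC Γ) : FPC Γ :=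
  ⟨fun δ => φ.1 (δ * γ), by
    apply (φ.2.image fun δ => δ * γ⁻¹).subset
    intro δ hδ
    exact ⟨δ * γ, hδ, by simp⟩⟩

/-- The empty partial coloring. -/
def emptyP (Γ : Type*) : FPC Γ := ⟨fun _ => none, by simp⟩

/-- The union (join) of two partial colorings (values of `φ` take precedence). -/
def joinP (φ ψ : FPC Γ) : FPC Γ :=
  ⟨fun δ => match φ.1 δ with | some c => some c | none => ψ.1 δ, by
    apply (φ.2.union ψ.2).subset
    intro δ hδ
    by_cases h : φ.1 δ = none
    · right
      simp only [mem_setOf_eq, h] at hδ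
      exact hδ
    · exact Or.inl h⟩

/-- The union of a finite list of partial colorings. -/
def joinList (l : List (FPC Γ)) : FPC Γ := l.foldr joinP (emptyP Γ)

/-- `φ[γ, r]`: the restriction of `φ` to the closed ball `B(γ, r)`. -/
noncomputable def restrictBall [MetricSpace Γ] (φ : FPC Γ) (γ : Γ) (r : ℝ) : FPC Γ :=
  ⟨fun δ => if dist γ δ ≤ r then φ.1 δ else none, by
    apply φ.2.subset
    intro δ hδ
    by_cases h : dist γ δ ≤ r
    · simp only [mem_setOf_eq, if_pos h] at hδ
      exact hδ
    · simp only [mem_setOf_eq, if_neg h] at hδ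
      exact absurd rfl hδ⟩

/-- `φ ∪ {(γ, c)}`. -/
def insertP [DecidableEq Γ] (φ : FPC Γ) (γ : Γ) (c : ℕ) : FPC Γ :=
  ⟨fun δ => if δ = γ then some c else φ.1 δ, by
    apply (φ.2.insert γ).subset
    intro δ hδ
    by_cases h : δ = γ
    · exact Or.inl h
    · right
      simp only [mem_setOf_eq, if_neg h] at hδ
      exact hδ⟩

/-- The restriction of a total coloring `ω` to a finite set `S`. -/
def restrictTo [DecidableEq Γ] (ω : Γ → ℕ) (S : Finset Γ) : FPC Γ :=
  ⟨fun δ => if δ ∈ S then some (ω δ) else none, by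
    apply S.finite_toSet.subset
    intro δ hδ
    by_cases h : δ ∈ S
    · exact h
    · simp only [mem_setOf_eq, if_neg h] at hδ
      exact absurd rfl hδ⟩

/-- Post-composition of a partial coloring with `ρ : ℕ → ℕ`. -/
def mapP (ρ : ℕ → ℕ) (φ : FPC Γ) : FPC Γ :=
  ⟨fun δ => (φ.1 δ).map ρ, by
    apply φ.2.subset
    intro δ hδ
    intro h
    simp only [mem_setOf_eq, h] at hδ
    exact hδ rfl⟩

/-- `ψ` is a restriction of `φ`. -/
def IsRestrictionOf (ψ φ : FPC Γ) : Prop := ∀ δ : Γ, ψ.1 δ = none ∨ ψ.1 δ = φ.1 δ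

/-- A `Γ`-ideal: a shift-invariant set of finite partial colorings closed under
restrictions. -/
def IsGammaIdeal [Group Γ] (P : Set (FPC Γ)) : Prop :=
  (∀ (γ : Γ), ∀ φ ∈ P, shiftP γ φ ∈ P) ∧
  (∀ φ ∈ P, ∀ ψ : FPC Γ, IsRestrictionOf ψ φ → ψ ∈ P)

/-- An extendable `Γ`-ideal. -/
def IsExtendable [DecidableEq Γ] (P : Set (FPC Γ)) : Prop :=
  ∀ φ ∈ P, ∀ γ : Γ, φ.1 γ = none → ∃ c : ℕ, insertP φ γ c ∈ P

/-- `φ` and `ψ` are `R`-separated: `dist(dom φ, dom ψ) > R φ + R ψ`. -/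
def RSeparated [MetricSpace Γ] (R : FPC Γ → ℝ) (φ ψ : FPC Γ) : Prop :=
  ∀ γ ∈ domP φ, ∀ δ ∈ domP ψ, R φ + R ψ < dist γ δ

/-- The join property of a `Γ`-ideal `P`. -/
def HasJoinProperty [Group Γ] [MetricSpace Γ] (P : Set (FPC Γ)) : Prop :=
  ∃ R : FPC Γ → ℝ, (∀ φ, 0 ≤ R φ) ∧ (∀ (γ : Γ), ∀ φ ∈ P, R (shiftP γ φ) = R φ) ∧
    ∀ l : List (FPC Γ), (∀ φ ∈ l, φ ∈ P) → l.Pairwise (RSeparated R) → joinList l ∈ P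

/-- `P^loc_r`: partial colorings that are `r`-locally in `P`. -/
def LocallyIn [MetricSpace Γ] (P : Set (FPC Γ)) (r : ℕ → ℝ) : Set (FPC Γ) :=
  {φ | ∀ (γ : Γ) (c : ℕ), φ.1 γ = some c → restrictBall φ γ (r c) ∈ P}

/-- A local `Γ`-ideal. -/
def IsLocal [MetricSpace Γ] (P : Set (FPC Γ)) : Prop :=
  ∃ r : ℕ → ℝ, (∀ c, 0 ≤ r c) ∧ P = LocallyIn P r

/-- `Col(P)`: colorings all of whose finite restrictions lie in `P`. -/
def ColOf [DecidableEq Γ] (P : Set (FPC Γ)) : Set (Γ → ℕ) :=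
  {ω | ∀ S : Finset Γ, restrictTo ω S ∈ P}

/-! ### The space of Baire measurable functions -/

/-- Baire measurable functions from `X` to `Y`. -/
abbrev BMFunSub (X Y : Type*) [TopologicalSpace X] [MeasurableSpace Y] :=
  {f : X → Y // BaireMFun f}

/-- Equality on a comeager set. -/
def BFunRel {X Y : Type*} [TopologicalSpace X] [MeasurableSpace Y]
    (f g : BMFunSub X Y) : Prop := {x : X | f.1 x = g.1 x} ∈ residual X

/-- `B(X,Y)`: Baire measurable functions modulo equality on a comeager set. -/
abbrev BFun (X Y : Type*) [TopologicalSpace X] [MeasurableSpace Y] :=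
  Quot (BFunRel (X := X) (Y := Y))

/-- `[U, A]`: the classes of functions `f` with `U ∖ f⁻¹(A)` meager. -/
def forceSet {X Y : Type*} [TopologicalSpace X] [MeasurableSpace Y]
    (U : Set X) (A : Set Y) : Set (BFun X Y) :=
  {F | ∃ f : BMFunSub X Y, Quot.mk BFunRel f = F ∧ IsMeagre (U \ f.1 ⁻¹' A)}

/-- `Σ(X,Y)`: the σ-algebra generated by the sets `[U, A]` for `U` nonempty open
and `A` Borel. -/
def SigmaXY (X Y : Type*) [TopologicalSpace X] [MeasurableSpace Y] :
    MeasurableSpace (BFun X Y) :=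
  MeasurableSpace.generateFrom
    {S | ∃ (U : Set X) (A : Set Y), IsOpen U ∧ U.Nonempty ∧ MeasurableSet A ∧ S = forceSet U A}

/-- The set of values of a finite partial coloring. -/
def valSet (φ : FPC Γ) : Set ℕ := {c | ∃ γ : Γ, φ.1 γ = some c}

lemma valSet_finite (φ : FPC Γ) : (valSet φ).Finite := by
  apply (φ.2.image fun γ => (φ.1 γ).getD 0).subset
  rintro c ⟨γ, hγ⟩
  exact ⟨γ, by simp [hγ], by simp [hγ]⟩

/-- The radius function used in the join property. -/
noncomputable def Rval (r : ℕ → ℝ) (φ : FPC Γ) : ℝ :=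
  sSup (insert 0 (r '' valSet φ))

lemma Rval_bdd (r : ℕ → ℝ) (φ : FPC Γ) : BddAbove (insert 0 (r '' valSet φ)) :=
  (((valSet_finite φ).image r).insert 0).bddAbove

lemma Rval_nonneg (r : ℕ → ℝ) (φ : FPC Γ) : 0 ≤ Rval r φ :=
  le_csSup (Rval_bdd r φ) (Set.mem_insert _ _)

lemma le_Rval {r : ℕ → ℝ} {φ : FPC Γ} {γ : Γ} {c : ℕ} (h : φ.1 γ = some c) :
    r c ≤ Rval r φ :=
  le_csSup (Rval_bdd r φ) (Set.mem_insert_of_mem _ ⟨c, ⟨γ, h⟩, rfl⟩)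

lemma valSet_shiftP [Group Γ] (γ : Γ) (φ : FPC Γ) : valSet (shiftP γ φ) = valSet φ := by
  ext c
  constructor
  · rintro ⟨δ, h⟩; exact ⟨δ * γ, h⟩
  · rintro ⟨δ, h⟩; exact ⟨δ * γ⁻¹, by simpa [shiftP, mul_assoc] using h⟩

lemma Rval_shiftP [Group Γ] (r : ℕ → ℝ) (γ : Γ) (φ : FPC Γ) :
    Rval r (shiftP γ φ) = Rval r φ := by
  unfold Rval
  rw [valSet_shiftP]

lemma joinList_none {l : List (FPC Γ)} {δ : Γ}
    (h : ∀ ψ ∈ l, ψ.1 δ = none) : (joinList l).1 δ = none := by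
  induction l with
  | nil => rfl
  | cons ψ₀ t ih =>
    show (joinP ψ₀ (joinList t)).1 δ = none
    have h0 := h ψ₀ (List.mem_cons_self)
    have ht := ih fun ψ hψ => h ψ (List.mem_cons_of_mem _ hψ)
    simp [joinP, h0, ht]

lemma joinList_some {l : List (FPC Γ)} {δ : Γ} {c : ℕ}
    (h : (joinList l).1 δ = some c) : ∃ φ ∈ l, φ.1 δ = some c := by
  induction l with
  | nil => exact absurd h (by simp [joinList, emptyP])
  | cons ψ₀ t ih =>
    have h' : (joinP ψ₀ (joinList t)).1 δ = some c := h
    rcases h0 : ψ₀.1 δ with _ | c'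
    · simp only [joinP, h0] at h'
      obtain ⟨φ, hφ, hφδ⟩ := ih h'
      exact ⟨φ, List.mem_cons_of_mem _ hφ, hφδ⟩
    · simp only [joinP, h0] at h'
      exact ⟨ψ₀, List.mem_cons_self, by rw [h0, ← h']⟩

lemma joinList_eq_some {l : List (FPC Γ)} {φ : FPC Γ} {δ : Γ} {c : ℕ}
    (hφ : φ ∈ l) (h : φ.1 δ = some c)
    (hall : ∀ ψ ∈ l, ψ.1 δ = none ∨ ψ.1 δ = some c) :
    (joinList l).1 δ = some c := by
  induction l with
  | nil => simp at hφ
  | cons ψ₀ t ih =>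
    show (joinP ψ₀ (joinList t)).1 δ = some c
    rcases hall ψ₀ (List.mem_cons_self) with h0 | h0
    · have hφt : φ ∈ t := by
        rcases List.mem_cons.1 hφ with rfl | ht
        · rw [h] at h0; exact absurd h0 (by simp)
        · exact ht
      have := ih hφt fun ψ hψ => hall ψ (List.mem_cons_of_mem _ hψ)
      simp [joinP, h0, this]
    · simp [joinP, h0]

lemma RSeparated_symm [MetricSpace Γ] (R : FPC Γ → ℝ) :
    Symmetric (RSeparated R) := by
  intro φ ψ h γ hγ δ hδ
  rw [dist_comm, add_comm]
  exact h δ hδ γ hγ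

/-- Every local `Γ`-ideal has the join property. -/
theorem stmt17 {Γ : Type*} [Group Γ] [Countable Γ] [Infinite Γ] [MetricSpace Γ]
    (hinv : ∀ γ δ g : Γ, dist (γ * g) (δ * g) = dist γ δ)
    (hproper : ∀ (γ : Γ) (r : ℝ), (Metric.closedBall γ r).Finite)
    (P : Set (FPC Γ)) (hP : IsGammaIdeal P) (hloc : IsLocal P) :
    HasJoinProperty P := by
  obtain ⟨r, hr0, hPr⟩ := hloc
  refine ⟨Rval r, Rval_nonneg r, fun γ φ _ => Rval_shiftP r γ φ, ?_⟩
  intro l hl hsep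
  haveI : Std.Symm (RSeparated (Γ := Γ) (Rval r)) := ⟨fun a b h => RSeparated_symm (Rval r) h⟩
  have hpair := hsep.forall
  rw [hPr]
  intro γ c hγc
  obtain ⟨φ, hφl, hφγ⟩ := joinList_some hγc
  have hφP : φ ∈ P := hl φ hφl
  -- any ψ in l other than φ vanishes on the ball B(γ, r c)
  have key : ∀ ψ ∈ l, ψ ≠ φ → ∀ δ : Γ, dist γ δ ≤ r c → ψ.1 δ = none := by
    intro ψ hψl hψφ δ hδ
    by_contra hne
    have hsep' : RSeparated (Rval r) φ ψ := hpair hφl hψl (Ne.symm hψφ)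
    have h1 : Rval r φ + Rval r ψ < dist γ δ := hsep' γ (by simp [domP, hφγ]) δ hne
    have h2 : r c ≤ Rval r φ := le_Rval hφγ
    have h3 : 0 ≤ Rval r ψ := Rval_nonneg r ψ
    linarith
  have heq : restrictBall (joinList l) γ (r c) = restrictBall φ γ (r c) := by
    apply Subtype.ext
    funext δ
    show (if dist γ δ ≤ r c then (joinList l).1 δ else none)
        = (if dist γ δ ≤ r c then φ.1 δ else none)
    by_cases hδ : dist γ δ ≤ r c
    · rw [if_pos hδ, if_pos hδ]
      rcases hφδ : φ.1 δ with _ | c'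
      · apply joinList_none
        intro ψ hψl
        by_cases hψφ : ψ = φ
        · rw [hψφ, hφδ]
        · exact key ψ hψl hψφ δ hδ
      · apply joinList_eq_some hφl hφδ
        intro ψ hψl
        by_cases hψφ : ψ = φ
        · rw [hψφ, hφδ]; exact Or.inr rfl
        · exact Or.inl (key ψ hψl hψφ δ hδ)
    · rw [if_neg hδ, if_neg hδ]
  rw [heq]
  have := hPr ▸ hφP
  exact this γ c hφγ


end DescColor
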